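/- Let a be a finite nonempty index set, and let (Y_i)_{i∈a} and (Z_i)_{i∈a} be two families of real-valued random variables on a probability space, each family mutually independent, where Y_i is Gaussian with mean θ_i and variance σ_i² and Z_i is Gaussian with mean θ̂_i and the same variance σ_i², for every i ∈ a. Then |E[max_{i∈a} Y_i] − E[max_{i∈a} Z_i]| ≤ 2 · max_{i∈a} |θ_i − θ̂_i|. -/

import Mathlib

open MeasureTheory ProbabilityTheory Real

lemma integrable_id_gaussianReal (m : ℝ) (v : NNReal) :
    Integrable id (gaussianReal m v) := by
  by_cases hv : v = 0
  · subst hv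
    rw [gaussianReal_zero_var]
    exact (integrable_const m).congr (ae_eq_dirac id).symm
  · rw [gaussianReal_of_var_ne_zero _ hv, gaussianPDF_def]
    rw [integrable_withDensity_iff (measurable_gaussianPDFReal m v).ennreal_ofReal
      (ae_of_all _ fun x => ENNReal.ofReal_lt_top)]
    have hv' : (0:ℝ) < v := lt_of_le_of_ne (v.coe_nonneg) (by exact_mod_cast (Ne.symm hv))
    have hb : (0:ℝ) < (2 * (v:ℝ))⁻¹ := by positivity
    set c : ℝ := (√(2 * π * v))⁻¹ with hc
    have hg : Integrable (fun x : ℝ => (x + m) * (c * rexp (-(2 * (v:ℝ))⁻¹ * x ^ 2))) := by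
      have h1 := (integrable_mul_exp_neg_mul_sq hb).const_mul c
      have h2 := (integrable_exp_neg_mul_sq hb).const_mul (c * m)
      refine (h1.add h2).congr (ae_of_all _ fun x => ?_)
      simp only [Pi.add_apply]
      ring
    refine (hg.comp_sub_right m).congr (ae_of_all _ fun x => ?_)
    simp only [gaussianPDFReal_def, id_eq]
    rw [ENNReal.toReal_ofReal (by positivity)]
    simp only [sub_add_cancel]
    rw [← hc]; ring_nf

lemma aemeasurable_joint {Ω : Type*} [MeasurableSpace Ω] {P : Measure Ω}
    {ι : Type*} [Countable ι] {Y : ι → Ω → ℝ} (h : ∀ i, AEMeasurable (Y i) P) :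
    AEMeasurable (fun ω i => Y i ω) P := by
  refine ⟨fun ω i => (h i).mk _ ω,
    measurable_pi_lambda _ fun i => (h i).measurable_mk, ?_⟩
  have hae : ∀ᵐ ω ∂P, ∀ i, Y i ω = (h i).mk _ ω := by
    rw [ae_all_iff]
    exact fun i => (h i).ae_eq_mk
  filter_upwards [hae] with ω hω
  exact funext hω

lemma map_joint_eq_pi {Ω : Type*} [MeasurableSpace Ω] (P : Measure Ω) [IsProbabilityMeasure P]
    {ι : Type*} [Fintype ι] (Y : ι → Ω → ℝ) (μs : ι → Measure ℝ)
    [∀ i, IsProbabilityMeasure (μs i)]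
    (hind : iIndepFun Y P)
    (hY : ∀ i, Measure.map (Y i) P = μs i)
    (hmeas : ∀ i, AEMeasurable (Y i) P) :
    Measure.map (fun ω i => Y i ω) P = Measure.pi μs := by
  refine (Measure.pi_eq fun s hs => ?_).symm
  rw [Measure.map_apply_of_aemeasurable (aemeasurable_joint hmeas) (MeasurableSet.univ_pi hs)]
  have hpre : (fun ω i => Y i ω) ⁻¹' (Set.pi Set.univ s) = ⋂ i ∈ Finset.univ, Y i ⁻¹' s i := by
    ext ω
    simp [Set.mem_pi]
  rw [hpre, hind.measure_inter_preimage_eq_mul Finset.univ (fun i _ => hs i)]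
  exact Finset.prod_congr rfl fun i _ => by
    rw [← hY i, Measure.map_apply_of_aemeasurable (hmeas i) (hs i)]

/-- **Lemma 3 of the paper.** The difference between the expected maximum under the true
means and under the estimated means is bounded by twice the largest per-coordinate
mean error. -/
theorem expected_max_mean_perturbation
    {Ω : Type*} [MeasurableSpace Ω] (P : Measure Ω) [IsProbabilityMeasure P]
    {ι : Type*} [Fintype ι] [Nonempty ι]
    (Y Z : ι → Ω → ℝ) (θ θhat : ι → ℝ) (σ2 : ι → NNReal)
    (hYindep : iIndepFun Y P)
    (hZindep : iIndepFun Z P)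
    (hY : ∀ i, Measure.map (Y i) P = gaussianReal (θ i) (σ2 i))
    (hZ : ∀ i, Measure.map (Z i) P = gaussianReal (θhat i) (σ2 i)) :
    |(∫ ω, Finset.univ.sup' Finset.univ_nonempty (fun i => Y i ω) ∂P) -
      ∫ ω, Finset.univ.sup' Finset.univ_nonempty (fun i => Z i ω) ∂P| ≤
      2 * Finset.univ.sup' Finset.univ_nonempty (fun i => |θ i - θhat i|) := by
  classical
  set M : ℝ := Finset.univ.sup' Finset.univ_nonempty (fun i => |θ i - θhat i|) with hMdef
  set c : ι → ℝ := fun i => θhat i - θ i with hcdef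
  set W : ι → Ω → ℝ := fun i ω => Y i ω + c i with hWdef
  -- a.e.-measurability
  have hYae : ∀ i, AEMeasurable (Y i) P := by
    intro i
    by_contra h
    have h0 := Measure.map_of_not_aemeasurable h
    rw [hY i] at h0
    exact IsProbabilityMeasure.ne_zero _ h0
  have hZae : ∀ i, AEMeasurable (Z i) P := by
    intro i
    by_contra h
    have h0 := Measure.map_of_not_aemeasurable h
    rw [hZ i] at h0
    exact IsProbabilityMeasure.ne_zero _ h0
  have hWae : ∀ i, AEMeasurable (W i) P := fun i => (hYae i).add_const (c i)
  -- independence of W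
  have hWindep : iIndepFun W P :=
    hYindep.comp (fun i x => x + c i) (fun i => measurable_add_const (c i))
  -- law of W
  have hW : ∀ i, Measure.map (W i) P = gaussianReal (θhat i) (σ2 i) := by
    intro i
    have h1 : Measure.map (W i) P = (Measure.map (Y i) P).map (· + c i) := by
      rw [AEMeasurable.map_map_of_aemeasurable
        (measurable_add_const (c i)).aemeasurable (hYae i)]
      rfl
    rw [h1, hY i, gaussianReal_map_add_const]
    congr 1
    simp [hcdef]
  -- joint laws agree for Z and W
  have hjZ : Measure.map (fun ω i => Z i ω) P
      = Measure.pi (fun i => gaussianReal (θhat i) (σ2 i)) :=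
    map_joint_eq_pi P Z _ hZindep hZ hZae
  have hjW : Measure.map (fun ω i => W i ω) P
      = Measure.pi (fun i => gaussianReal (θhat i) (σ2 i)) :=
    map_joint_eq_pi P W _ hWindep hW hWae
  -- the sup function
  set f : (ι → ℝ) → ℝ := fun x => Finset.univ.sup' Finset.univ_nonempty (fun i => x i)
    with hfdef
  have hf : Measurable f := by
    have : f = Finset.univ.sup' Finset.univ_nonempty (fun i (x : ι → ℝ) => x i) := by
      funext x
      rw [Finset.sup'_apply]
    rw [this]
    exact Finset.measurable_sup' _ fun i _ => measurable_pi_apply i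
  -- E[sup Z] = E[sup W]
  have hZW : (∫ ω, Finset.univ.sup' Finset.univ_nonempty (fun i => Z i ω) ∂P)
      = ∫ ω, Finset.univ.sup' Finset.univ_nonempty (fun i => W i ω) ∂P := by
    have e1 : (∫ ω, Finset.univ.sup' Finset.univ_nonempty (fun i => Z i ω) ∂P)
        = ∫ x, f x ∂(Measure.map (fun ω i => Z i ω) P) := by
      rw [integral_map (aemeasurable_joint hZae) hf.aestronglyMeasurable]
    have e2 : (∫ ω, Finset.univ.sup' Finset.univ_nonempty (fun i => W i ω) ∂P)
        = ∫ x, f x ∂(Measure.map (fun ω i => W i ω) P) := by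
      rw [integral_map (aemeasurable_joint hWae) hf.aestronglyMeasurable]
    rw [e1, e2, hjZ, hjW]
  rw [hZW]
  -- integrability
  have hYint : ∀ i, Integrable (Y i) P := by
    intro i
    have h1 : Integrable id (Measure.map (Y i) P) := by
      rw [hY i]
      exact integrable_id_gaussianReal _ _
    rwa [integrable_map_measure aestronglyMeasurable_id (hYae i)] at h1
  have hWint : ∀ i, Integrable (W i) P := fun i => (hYint i).add (integrable_const (c i))
  have habs_bound : ∀ (V : ι → Ω → ℝ) (ω : Ω),
      |Finset.univ.sup' Finset.univ_nonempty (fun i => V i ω)| ≤ ∑ i, |V i ω| := by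
    intro V ω
    rw [abs_le]
    constructor
    · obtain i0 := Classical.arbitrary ι
      calc -∑ i, |V i ω| ≤ -|V i0 ω| := by
              apply neg_le_neg
              exact Finset.single_le_sum (f := fun j => |V j ω|)
                (fun j _ => abs_nonneg _) (Finset.mem_univ i0)
        _ ≤ V i0 ω := neg_abs_le _
        _ ≤ _ := Finset.le_sup' (fun i => V i ω) (Finset.mem_univ i0)
    · refine Finset.sup'_le _ _ fun i _ => ?_
      exact le_trans (le_abs_self _)
        (Finset.single_le_sum (f := fun j => |V j ω|)
          (fun j _ => abs_nonneg _) (Finset.mem_univ i))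
  have hsupint : ∀ (V : ι → Ω → ℝ), (∀ i, Integrable (V i) P) →
      (∀ i, AEMeasurable (V i) P) →
      Integrable (fun ω => Finset.univ.sup' Finset.univ_nonempty (fun i => V i ω)) P := by
    intro V hint hae
    have hsum : Integrable (fun ω => ∑ i, |V i ω|) P :=
      integrable_finset_sum _ fun i _ => (hint i).abs
    refine hsum.mono' ?_ (ae_of_all _ fun ω => by
      rw [Real.norm_eq_abs]; exact habs_bound V ω)
    exact (hf.comp_aemeasurable (aemeasurable_joint hae)).aestronglyMeasurable
  have hYsupint := hsupint Y hYint hYae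
  have hWsupint := hsupint W hWint hWae
  -- bound on perturbation
  have hM0 : 0 ≤ M := le_trans (abs_nonneg (θ (Classical.arbitrary ι) - θhat (Classical.arbitrary ι)))
    (Finset.le_sup' (fun i => |θ i - θhat i|) (Finset.mem_univ (Classical.arbitrary ι)))
  have hcM : ∀ i, |c i| ≤ M := by
    intro i
    rw [hcdef]
    simp only [abs_sub_comm (θhat i) (θ i)]
    exact Finset.le_sup' (fun i => |θ i - θhat i|) (Finset.mem_univ i)
  have hpoint : ∀ ω, |Finset.univ.sup' Finset.univ_nonempty (fun i => Y i ω)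
      - Finset.univ.sup' Finset.univ_nonempty (fun i => W i ω)| ≤ M := by
    intro ω
    rw [abs_sub_le_iff]
    constructor
    · rw [sub_le_iff_le_add]
      refine Finset.sup'_le _ _ fun i _ => ?_
      calc Y i ω = (Y i ω + c i) + (-c i) := by ring
        _ ≤ Finset.univ.sup' Finset.univ_nonempty (fun i => W i ω) + M := by
            apply add_le_add
            · exact Finset.le_sup' (fun i => W i ω) (Finset.mem_univ i)
            · exact le_trans (neg_le_abs _) (hcM i)
        _ = M + Finset.univ.sup' Finset.univ_nonempty (fun i => W i ω) := add_comm _ _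
    · rw [sub_le_iff_le_add]
      refine Finset.sup'_le _ _ fun i _ => ?_
      calc W i ω = Y i ω + c i := rfl
        _ ≤ Finset.univ.sup' Finset.univ_nonempty (fun i => Y i ω) + M := by
            apply add_le_add
            · exact Finset.le_sup' (fun i => Y i ω) (Finset.mem_univ i)
            · exact le_trans (le_abs_self _) (hcM i)
        _ = M + Finset.univ.sup' Finset.univ_nonempty (fun i => Y i ω) := add_comm _ _
  -- conclude
  rw [← integral_sub hYsupint hWsupint]
  calc |∫ ω, (Finset.univ.sup' Finset.univ_nonempty (fun i => Y i ω)
        - Finset.univ.sup' Finset.univ_nonempty (fun i => W i ω)) ∂P|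
      ≤ ∫ ω, |Finset.univ.sup' Finset.univ_nonempty (fun i => Y i ω)
        - Finset.univ.sup' Finset.univ_nonempty (fun i => W i ω)| ∂P :=
        by
          simpa [Real.norm_eq_abs] using
            norm_integral_le_integral_norm (μ := P)
              (f := fun ω => Finset.univ.sup' Finset.univ_nonempty (fun i => Y i ω)
                - Finset.univ.sup' Finset.univ_nonempty (fun i => W i ω))
    _ ≤ ∫ _, M ∂P := by
        refine integral_mono (hYsupint.sub hWsupint).abs (integrable_const M)
          fun ω => hpoint ω
    _ = M := by simp
    _ ≤ 2 * M := by linarith
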